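/- Let T be a standard labeling of Y(λ), and for u > 0 set z(u) = (u, u², …, u^N) ∈ ℂ^N. Then there exist u₀ > 0 and functions t_i^{(b)} : (u₀, ∞) → ℂ, indexed by pairs of an integer 1 ≤ i ≤ k−1 and a box b of Y(λ) lying in a row of index > i, such that: (a) for every u > u₀, the tuple t(u) is a critical point of the master function S(·, z(u)); (b) for each such (i,b) there is a rational number β_i^{(b)} with 0 < β_i^{(b)} < 1 such that t_i^{(b)}(u)/u^{T(b)} → β_i^{(b)} as u → ∞; (c) for each j ∈ {1,…,N}, z_j(u)·( Σ_{ℓ≠j} (z_j(u) − z_ℓ(u))^{-1} − Σ_b (z_j(u) − t_1^{(b)}(u))^{-1} ) → c(T,j) = y(T,j) − x(T,j) as u → ∞. -/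

import Mathlib

open Finset Filter

noncomputable section

namespace AC

open Fin.NatCast

/-- rescaled interaction term: represents `t/(S - t)` where `t = x·u^m`, `S = w·u^p`,
`d = p - m`, `ε = u⁻¹`. -/
def Q (d : ℤ) (x w ε : ℂ) : ℂ :=
  if 0 ≤ d then x * ε ^ d.toNat / (w - x * ε ^ d.toNat)
  else x / (w * ε ^ (-d).toNat - x)

lemma Q_inv_eq {u : ℂ} (hu : u ≠ 0) (m p : ℕ) (x w : ℂ) :
    Q ((p : ℤ) - m) x w u⁻¹ = x * u ^ m / (w * u ^ p - x * u ^ m) := by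
  rcases le_or_gt m p with h | h
  · have h0 : (0:ℤ) ≤ (p:ℤ) - m := by omega
    have ht : ((p:ℤ) - m).toNat = p - m := by omega
    have epow : u ^ p * (u⁻¹) ^ (p - m) = u ^ m := by
      rw [inv_pow, mul_inv_eq_iff_eq_mul₀ (pow_ne_zero _ hu), ← pow_add]
      congr 1; omega
    have e1 : x * u ^ m = u ^ p * (x * (u⁻¹) ^ (p - m)) := by
      rw [mul_left_comm, epow]
    have e2 : w * u ^ p - x * u ^ m = u ^ p * (w - x * (u⁻¹) ^ (p - m)) := by
      rw [mul_sub, mul_left_comm, epow]; ring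
    rw [Q, if_pos h0, ht, e2, e1, mul_div_mul_left _ _ (pow_ne_zero p hu)]
  · have h0 : ¬ (0:ℤ) ≤ (p:ℤ) - m := by omega
    have ht : (-((p:ℤ) - m)).toNat = m - p := by omega
    have epow : u ^ m * (u⁻¹) ^ (m - p) = u ^ p := by
      rw [inv_pow, mul_inv_eq_iff_eq_mul₀ (pow_ne_zero _ hu), ← pow_add]
      congr 1; omega
    have e1 : x * u ^ m = u ^ m * x := mul_comm _ _
    have e2 : w * u ^ p - x * u ^ m = u ^ m * (w * (u⁻¹) ^ (m - p) - x) := by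
      rw [mul_sub, mul_left_comm, epow]; ring
    rw [Q, if_neg h0, ht, e2, e1, mul_div_mul_left _ _ (pow_ne_zero m hu)]

lemma Q_zero_neg {d : ℤ} (h : d < 0) {x : ℂ} (hx : x ≠ 0) (w : ℂ) : Q d x w 0 = -1 := by
  have : (-d).toNat ≠ 0 := by omega
  rw [Q, if_neg (by omega), zero_pow this, mul_zero, zero_sub, div_neg, div_self hx]

lemma Q_zero_zero {d : ℤ} (h : d = 0) (x w : ℂ) : Q d x w 0 = x / (w - x) := by
  subst h; simp [Q]

lemma Q_zero_pos {d : ℤ} (h : 0 < d) (x w : ℂ) : Q d x w 0 = 0 := by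
  have : d.toNat ≠ 0 := by omega
  rw [Q, if_pos h.le, zero_pow this, mul_zero, zero_div]

variable {H : Type*} [NormedAddCommGroup H] [NormedSpace ℂ H]

lemma Q_contDiffAt {d : ℤ} {F W G : H → ℂ} {p : H}
    (hF : ContDiffAt ℂ 1 F p) (hW : ContDiffAt ℂ 1 W p) (hG : ContDiffAt ℂ 1 G p)
    (hden : (if 0 ≤ d then W p - F p * G p ^ d.toNat
             else W p * G p ^ (-d).toNat - F p) ≠ 0) :
    ContDiffAt ℂ 1 (fun q => Q d (F q) (W q) (G q)) p := by
  rcases le_or_gt 0 d with h | h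
  · rw [if_pos h] at hden
    simp only [Q, if_pos h]
    exact (hF.mul (hG.pow _)).div (hW.sub (hF.mul (hG.pow _))) hden
  · rw [if_neg (not_le.mpr h)] at hden
    simp only [Q, if_neg (not_le.mpr h)]
    exact hF.div ((hW.mul (hG.pow _)).sub hF) hden

lemma Q_tendsto {α : Type*} {l : Filter α} {d : ℤ} {x w0 : ℂ} {w g : α → ℂ}
    (hw : Tendsto w l (nhds w0)) (hg : Tendsto g l (nhds 0))
    (hden : (if 0 ≤ d then w0 - x * (0:ℂ) ^ d.toNat
             else w0 * (0:ℂ) ^ (-d).toNat - x) ≠ 0) :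
    Tendsto (fun s => Q d x (w s) (g s)) l (nhds (Q d x w0 0)) := by
  rcases le_or_gt 0 d with h | h
  · rw [if_pos h] at hden
    simp only [Q, if_pos h]
    have hnum : Tendsto (fun s => x * g s ^ d.toNat) l (nhds (x * (0:ℂ) ^ d.toNat)) :=
      tendsto_const_nhds.mul (hg.pow _)
    exact hnum.div ((hw.sub hnum)) hden
  · rw [if_neg (not_le.mpr h)] at hden
    simp only [Q, if_neg (not_le.mpr h)]
    exact tendsto_const_nhds.div ((hw.mul (hg.pow _)).sub tendsto_const_nhds) hden

lemma sum_Q_zero {N : ℕ} (b : Fin N) (S : Finset (Fin N)) {x : ℂ} (hx : x ≠ 0) (w : Fin N → ℂ) :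
    ∑ a ∈ S, Q ((a : ℤ) - (b : ℤ)) x (w a) 0
      = -((S.filter (fun a : Fin N => (a : ℕ) < (b : ℕ))).card : ℂ)
        + (if b ∈ S then x / (w b - x) else 0) := by
  have hterm : ∀ a ∈ S, Q ((a : ℤ) - (b : ℤ)) x (w a) 0
      = (if (a : ℕ) < (b : ℕ) then (-1 : ℂ) else if a = b then x / (w a - x) else 0) := by
    intro a _
    rcases lt_trichotomy (a : ℕ) (b : ℕ) with hlt | heq | hgt
    · rw [Q_zero_neg (by omega) hx, if_pos hlt]
    · have : a = b := Fin.ext heq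
      subst this
      rw [Q_zero_zero (by omega), if_neg (lt_irrefl _), if_pos rfl]
    · rw [Q_zero_pos (by omega), if_neg (by omega), if_neg (by
        intro hab; subst hab; omega)]
  rw [Finset.sum_congr rfl hterm,
    ← Finset.sum_filter_add_sum_filter_not S (fun a : Fin N => (a : ℕ) < (b : ℕ))]
  congr 1
  · rw [Finset.sum_congr rfl (fun a ha => if_pos (Finset.mem_filter.mp ha).2),
      Finset.sum_const, nsmul_eq_mul, mul_neg_one]
  · rw [Finset.sum_congr rfl (fun a ha => if_neg (Finset.mem_filter.mp ha).2),
      Finset.sum_ite_eq' ]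
    by_cases hb : b ∈ S
    · rw [if_pos (Finset.mem_filter.mpr ⟨hb, lt_irrefl _⟩), if_pos hb]
    · rw [if_neg (fun hc => hb (Finset.mem_filter.mp hc).1), if_neg hb]

lemma card_filter_val_lt {N : ℕ} (b : Fin N) :
    ((univ : Finset (Fin N)).filter (fun a : Fin N => (a : ℕ) < (b : ℕ))).card = (b : ℕ) := by
  rw [show (univ : Finset (Fin N)).filter (fun a : Fin N => (a : ℕ) < (b : ℕ)) = Finset.Iio b from by
    ext a
    simp only [Finset.mem_filter, Finset.mem_Iio, Finset.mem_univ, true_and, Fin.lt_def]]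
  exact Fin.card_Iio b


section Comb
variable {N k : ℕ} {lam : ℕ → ℕ} {row col : Fin N → ℕ}

/-- number of boxes with label `< b` lying strictly below row `s` -/
def fcnt (row : Fin N → ℕ) (s : ℕ) (b : Fin N) : ℕ :=
  ((univ : Finset (Fin N)).filter (fun j : Fin N => (j : ℕ) < (b : ℕ) ∧ s < row j)).card

/-- number of boxes with label `< b` in row `s` -/
def mu (row : Fin N → ℕ) (s : ℕ) (b : Fin N) : ℕ :=
  ((univ : Finset (Fin N)).filter (fun j : Fin N => (j : ℕ) < (b : ℕ) ∧ row j = s)).card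

/-- the limiting value of the auxiliary Bethe variable `a_i^{(b)}` -/
def Aint (row col : Fin N → ℕ) (i : ℕ) (b : Fin N) : ℤ :=
  (row b : ℤ) - i - 1 + (mu row i b : ℤ) - (mu row (row b) b : ℤ)

variable (hk : 1 ≤ k)
  (hmono : ∀ i j : ℕ, 1 ≤ i → i ≤ j → j ≤ k → lam j ≤ lam i)
  (hpos : 1 ≤ lam k)
  (hsum : ∑ i ∈ Finset.Icc 1 k, lam i = N)
  (hbox : ∀ j : Fin N, 1 ≤ row j ∧ row j ≤ k ∧ 1 ≤ col j ∧ col j ≤ lam (row j))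
  (hinj : Function.Injective (fun j : Fin N => (row j, col j)))
  (hstdrow : ∀ j j' : Fin N, row j = row j' → col j < col j' → j < j')
  (hstdcol : ∀ j j' : Fin N, col j = col j' → row j < row j' → j < j')

include hk hmono hpos hsum in
lemma k_le_N : k ≤ N := by
  have : ∀ i ∈ Finset.Icc 1 k, 1 ≤ lam i := by
    intro i hi
    rcases Finset.mem_Icc.mp hi with ⟨h1, h2⟩
    exact le_trans hpos (hmono i k h1 h2 le_rfl)
  calc k = ∑ i ∈ Finset.Icc 1 k, 1 := by simp
    _ ≤ ∑ i ∈ Finset.Icc 1 k, lam i := Finset.sum_le_sum this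
    _ = N := hsum

include hsum hbox hinj in
lemma box_surj : ∀ i c : ℕ, 1 ≤ i → i ≤ k → 1 ≤ c → c ≤ lam i →
    ∃ j : Fin N, row j = i ∧ col j = c := by
  classical
  set S : Finset (ℕ × ℕ) :=
    (Finset.Icc 1 k).biUnion (fun i => (Finset.Icc 1 (lam i)).image (fun c => (i, c))) with hS
  have hcard : S.card = N := by
    rw [hS, Finset.card_biUnion]
    · rw [← hsum]
      refine Finset.sum_congr rfl (fun i _ => ?_)
      rw [Finset.card_image_of_injective _ (fun c c' h => by
        simpa using (Prod.mk.injEq i c i c').mp h |>.2), Nat.card_Icc]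
      omega
    · intro i _ i' _ hne
      refine Finset.disjoint_left.mpr (fun p hp hp' => ?_)
      obtain ⟨c, _, rfl⟩ := Finset.mem_image.mp hp
      obtain ⟨c', _, h⟩ := Finset.mem_image.mp hp'
      exact hne ((Prod.mk.injEq _ _ _ _).mp h).1.symm
  have hsub : (univ : Finset (Fin N)).image (fun j : Fin N => (row j, col j)) ⊆ S := by
    intro p hp
    obtain ⟨j, _, rfl⟩ := Finset.mem_image.mp hp
    obtain ⟨h1, h2, h3, h4⟩ := hbox j
    exact Finset.mem_biUnion.mpr ⟨row j, Finset.mem_Icc.mpr ⟨h1, h2⟩,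
      Finset.mem_image.mpr ⟨col j, Finset.mem_Icc.mpr ⟨h3, h4⟩, rfl⟩⟩
  have himg : (univ : Finset (Fin N)).image (fun j : Fin N => (row j, col j)) = S := by
    apply Finset.eq_of_subset_of_card_le hsub
    rw [hcard, Finset.card_image_of_injective _ hinj, Finset.card_univ, Fintype.card_fin]
  intro i c h1 h2 h3 h4
  have hmem : (i, c) ∈ S := Finset.mem_biUnion.mpr
    ⟨i, Finset.mem_Icc.mpr ⟨h1, h2⟩, Finset.mem_image.mpr ⟨c, Finset.mem_Icc.mpr ⟨h3, h4⟩, rfl⟩⟩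
  rw [← himg] at hmem
  obtain ⟨j, _, hj⟩ := Finset.mem_image.mp hmem
  exact ⟨j, ((Prod.mk.injEq _ _ _ _).mp hj).1, ((Prod.mk.injEq _ _ _ _).mp hj).2⟩

include hsum hbox hinj hstdrow in
lemma mu_row_eq (b : Fin N) : mu row (row b) b = col b - 1 := by
  classical
  obtain ⟨hr1, hr2, hc1, hc2⟩ := hbox b
  apply le_antisymm
  · -- injection into Icc 1 (col b - 1) via col
    have : mu row (row b) b ≤ (Finset.Icc 1 (col b - 1)).card := by
      apply Finset.card_le_card_of_injOn col
      · intro j hj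
        rcases Finset.mem_filter.mp hj with ⟨-, hjb, hjr⟩
        rcases hbox j with ⟨-, -, hc1', -⟩
        refine Finset.mem_Icc.mpr ⟨hc1', ?_⟩
        have hne : col j ≠ col b := by
          intro h
          have : j = b := hinj (by simp [Prod.ext_iff, hjr, h])
          omega
        have : ¬ col b < col j := by
          intro h
          have := hstdrow b j hjr.symm h
          rw [Fin.lt_def] at this
          omega
        omega
      · intro j hj j' hj' hcc
        rcases Finset.mem_filter.mp hj with ⟨-, -, hjr⟩
        rcases Finset.mem_filter.mp hj' with ⟨-, -, hjr'⟩
        exact hinj (by simp [Prod.ext_iff, hjr, hjr', hcc])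
    rwa [Nat.card_Icc, Nat.add_sub_cancel] at this
  · -- injection from Icc 1 (col b - 1) via box_surj
    have hst : ∀ c' ∈ Finset.Icc 1 (col b - 1), ∃ j : Fin N,
        row j = row b ∧ col j = c' := by
      intro c' hc'
      rcases Finset.mem_Icc.mp hc' with ⟨h1, h2⟩
      exact box_surj hsum hbox hinj (row b) c' hr1 hr2 h1 (by omega)
    choose g hg1 hg2 using hst
    have : (Finset.Icc 1 (col b - 1)).card ≤ mu row (row b) b := by
      apply Finset.card_le_card_of_injOn (fun c' => if h : c' ∈ Finset.Icc 1 (col b - 1) then g c' h else b)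
      · intro c' hc'
        simp only [Finset.mem_coe] at hc' ⊢
        rw [dif_pos hc']
        refine Finset.mem_filter.mpr ⟨Finset.mem_univ _, ?_, hg1 c' hc'⟩
        have hlt : col (g c' hc') < col b := by
          have := hg2 c' hc'
          rcases Finset.mem_Icc.mp hc' with ⟨h1, h2⟩
          omega
        have := hstdrow (g c' hc') b (hg1 c' hc') hlt
        rw [Fin.lt_def] at this
        omega
      · intro c1 hh1 c2 hh2 he
        have hh1' : c1 ∈ Finset.Icc 1 (col b - 1) := hh1
        have hh2' : c2 ∈ Finset.Icc 1 (col b - 1) := hh2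
        simp only [dif_pos hh1', dif_pos hh2'] at he
        have e1 := hg2 c1 hh1'
        have e2 := hg2 c2 hh2'
        rw [he] at e1
        omega
    rwa [Nat.card_Icc, Nat.add_sub_cancel] at this

include hsum hbox hinj hmono hstdrow hstdcol in
lemma mu_ge {b : Fin N} {i : ℕ} (h1 : 1 ≤ i) (h2 : i < row b) : col b ≤ mu row i b := by
  classical
  obtain ⟨hr1, hr2, hc1, hc2⟩ := hbox b
  have hik : i ≤ k := by omega
  have hlam : col b ≤ lam i := le_trans hc2 (hmono i (row b) h1 (by omega) hr2)
  have hst : ∀ c' ∈ Finset.Icc 1 (col b), ∃ j : Fin N, row j = i ∧ col j = c' := by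
    intro c' hc'
    rcases Finset.mem_Icc.mp hc' with ⟨hh1, hh2⟩
    exact box_surj hsum hbox hinj i c' h1 hik hh1 (by omega)
  choose g hg1 hg2 using hst
  -- the box in position (i, col b)
  have hcb : col b ∈ Finset.Icc 1 (col b) := Finset.mem_Icc.mpr ⟨hc1, le_rfl⟩
  have hgb : g (col b) hcb < b :=
    hstdcol _ b (by rw [hg2]) (by rw [hg1]; exact h2)
  have hmem : ∀ c' (hc' : c' ∈ Finset.Icc 1 (col b)), (g c' hc' : ℕ) < (b : ℕ) := by
    intro c' hc'
    rcases Finset.mem_Icc.mp hc' with ⟨hh1, hh2⟩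
    rcases eq_or_lt_of_le hh2 with he | hlt
    · subst he
      exact Fin.lt_def.mp hgb
    · have h1' : g c' hc' < g (col b) hcb :=
        hstdrow _ _ (by rw [hg1, hg1]) (by rw [hg2, hg2]; exact hlt)
      have hx := Fin.lt_def.mp h1'
      have hy := Fin.lt_def.mp hgb
      omega
  have : (Finset.Icc 1 (col b)).card ≤ mu row i b := by
    apply Finset.card_le_card_of_injOn
      (fun c' => if h : c' ∈ Finset.Icc 1 (col b) then g c' h else b)
    · intro c' hc'
      simp only [Finset.mem_coe] at hc' ⊢
      rw [dif_pos hc']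
      exact Finset.mem_filter.mpr ⟨Finset.mem_univ _, hmem c' hc', hg1 c' hc'⟩
    · intro c1 hh1 c2 hh2 he
      have hh1' : c1 ∈ Finset.Icc 1 (col b) := hh1
      have hh2' : c2 ∈ Finset.Icc 1 (col b) := hh2
      simp only [dif_pos hh1', dif_pos hh2'] at he
      have e1 := hg2 c1 hh1'
      have e2 := hg2 c2 hh2'
      rw [he] at e1
      omega
  rwa [Nat.card_Icc, Nat.add_sub_cancel] at this

lemma fcnt_split (s : ℕ) (hs : 1 ≤ s) (b : Fin N) :
    fcnt row (s - 1) b = mu row s b + fcnt row s b := by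
  classical
  rw [fcnt, mu, fcnt, ← Finset.card_union_of_disjoint (by
    refine Finset.disjoint_left.mpr (fun j hj hj' => ?_)
    rcases Finset.mem_filter.mp hj with ⟨-, -, h1⟩
    rcases Finset.mem_filter.mp hj' with ⟨-, -, h2⟩
    omega)]
  congr 1
  ext j
  simp only [Finset.mem_filter, Finset.mem_union, Finset.mem_univ, true_and]
  omega

lemma fcnt_zero (hrow1 : ∀ j, 1 ≤ row j) (b : Fin N) : fcnt row 0 b = (b : ℕ) := by
  rw [fcnt, show ((univ : Finset (Fin N)).filter (fun j : Fin N => (j : ℕ) < (b : ℕ) ∧ 0 < row j))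
      = (univ : Finset (Fin N)).filter (fun a : Fin N => (a : ℕ) < (b : ℕ)) from by
    ext j
    simp only [Finset.mem_filter, Finset.mem_univ, true_and]
    exact ⟨fun h => h.1, fun h => ⟨h, hrow1 j⟩⟩]
  exact card_filter_val_lt b

include hsum hbox hinj hmono hstdrow hstdcol in
lemma Aint_pos {b : Fin N} {i : ℕ} (h1 : 1 ≤ i) (h2 : i < row b) : 1 ≤ Aint row col i b := by
  have hmu := mu_ge hmono hsum hbox hinj hstdrow hstdcol h1 h2
  have hre := mu_row_eq hsum hbox hinj hstdrow b
  have := (hbox b).2.2.1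
  rw [Aint, hre]
  omega

lemma chain_eq {b : Fin N} {i : ℕ} (h1 : 1 ≤ i) (h2 : i < row b) :
    Aint row col i b - (if i + 1 < row b then Aint row col (i + 1) b + 1 else 0)
      + (2 * (fcnt row i b : ℤ) - (fcnt row (i + 1) b : ℤ) - (fcnt row (i - 1) b : ℤ)) = 0 := by
  have s1 : fcnt row (i - 1) b = mu row i b + fcnt row i b := by
    have := fcnt_split (row := row) i h1 b
    omega
  have s2 : fcnt row ((i + 1) - 1) b = mu row (i + 1) b + fcnt row (i + 1) b :=
    fcnt_split (row := row) (i + 1) (by omega) b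
  simp only [Nat.add_sub_cancel] at s2
  by_cases hlt : i + 1 < row b
  · rw [if_pos hlt]
    rw [Aint, Aint]
    omega
  · rw [if_neg hlt]
    have hr : row b = i + 1 := by omega
    rw [Aint, hr]
    have : mu row (i + 1) b = mu row (i+1) b := rfl
    omega

include hsum hbox hinj hstdrow in
lemma content_eq (b : Fin N) :
    ((b : ℕ) : ℤ) - (fcnt row 1 b : ℤ)
      - (if 1 < row b then 1 + Aint row col 1 b else 0) = (col b : ℤ) - (row b : ℤ) := by
  obtain ⟨hr1, hr2, hc1, hc2⟩ := hbox b
  have hf0 : fcnt row 0 b = (b : ℕ) := fcnt_zero (fun j => (hbox j).1) b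
  have s1 : fcnt row 0 b = mu row 1 b + fcnt row 1 b := by
    have := fcnt_split (row := row) 1 le_rfl b
    simpa using this
  have hre := mu_row_eq hsum hbox hinj hstdrow b
  by_cases h : 1 < row b
  · rw [if_pos h, Aint, hre]
    omega
  · rw [if_neg h]
    have hr : row b = 1 := by omega
    rw [hr] at hre
    omega

end Comb
section Main
variable {N k : ℕ} {lam : ℕ → ℕ} {row col : Fin N → ℕ}

abbrev ESp (N : ℕ) := Fin (N + 2) → Fin N → ℂ
abbrev FullSp (N : ℕ) := ℂ × ESp N

/-- access with a natural-number row index -/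
def gy (y : ESp N) (i : ℕ) (b : Fin N) : ℂ := y (i : Fin (N + 2)) b

lemma gy_add (y z : ESp N) (i : ℕ) (b : Fin N) : gy (y + z) i b = gy y i b + gy z i b := rfl

/-- the product variable `x_i^{(b)}` in terms of the chain variables `y` -/
def Xf (i : ℕ) (b : Fin N) (y : ESp N) : ℂ :=
  ∏ m ∈ Finset.Icc 1 i, (gy y m b / (1 + gy y m b))

lemma Xf_zero_idx (b : Fin N) (y : ESp N) : Xf 0 b y = 1 := by simp [Xf]

lemma Xf_succ (j : ℕ) (b : Fin N) (y : ESp N) :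
    Xf (j + 1) b y = Xf j b y * (gy y (j + 1) b / (1 + gy y (j + 1) b)) :=
  Finset.prod_Icc_succ_top (by omega) _

lemma Xf_pred {j : ℕ} (h : 1 ≤ j) (b : Fin N) (y : ESp N) :
    Xf j b y = Xf (j - 1) b y * (gy y j b / (1 + gy y j b)) := by
  obtain ⟨j', rfl⟩ := Nat.exists_eq_add_of_le h
  simpa [Nat.add_comm] using Xf_succ j' b y

lemma ratio1 {x' g : ℂ} (hx : x' ≠ 0) (hg1 : 1 + g ≠ 0) :
    (x' * (g / (1 + g))) / (x' - x' * (g / (1 + g))) = g := by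
  have h1 : x' - x' * (g / (1 + g)) = x' / (1 + g) := by
    field_simp
    ring
  have h2 : x' / (1 + g) ≠ 0 := div_ne_zero hx hg1
  rw [h1, div_eq_iff h2]
  field_simp

lemma ratio2 {x g : ℂ} (hx : x ≠ 0) (hg1 : 1 + g ≠ 0) :
    x / (x * (g / (1 + g)) - x) = -(1 + g) := by
  have h1 : x * (g / (1 + g)) - x = -(x / (1 + g)) := by
    field_simp
    ring
  have h2 : x / (1 + g) ≠ 0 := div_ne_zero hx hg1
  rw [h1, div_neg, neg_inj, div_div_eq_mul_div, mul_comm, mul_div_assoc, div_self hx, mul_one]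

def fltS (row : Fin N → ℕ) (s : ℕ) : Finset (Fin N) :=
  univ.filter (fun b' : Fin N => s < row b')

def flt2S (row : Fin N → ℕ) (i : ℕ) (b : Fin N) : Finset (Fin N) :=
  univ.filter (fun b' : Fin N => i < row b' ∧ b' ≠ b)

/-- the rescaled Bethe equation function -/
def Gc (row : Fin N → ℕ) (i : ℕ) (b : Fin N) (ε : ℂ) (y : ESp N) : ℂ :=
  (if i = 1 then ∑ a : Fin N, Q ((a : ℤ) - (b : ℤ)) (Xf i b y) 1 ε else 0)
  - 2 * ∑ b' ∈ flt2S row i b, Q ((b' : ℤ) - (b : ℤ)) (Xf i b y) (Xf i b' y) ε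
  + ∑ b' ∈ fltS row (i + 1), Q ((b' : ℤ) - (b : ℤ)) (Xf i b y) (Xf (i + 1) b' y) ε
  + (if 2 ≤ i then ∑ b' ∈ fltS row (i - 1), Q ((b' : ℤ) - (b : ℤ)) (Xf i b y) (Xf (i - 1) b' y) ε
     else 0)

lemma card_fltS_lt (s : ℕ) (b : Fin N) :
    ((fltS row s).filter (fun a : Fin N => (a : ℕ) < (b : ℕ))).card = fcnt row s b := by
  rw [fcnt]; congr 1; ext j
  simp only [fltS, Finset.mem_filter, Finset.mem_univ, true_and]
  tauto

lemma card_flt2S_lt (i : ℕ) (b : Fin N) :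
    ((flt2S row i b).filter (fun a : Fin N => (a : ℕ) < (b : ℕ))).card = fcnt row i b := by
  rw [fcnt]; congr 1; ext j
  simp only [flt2S, Finset.mem_filter, Finset.mem_univ, true_and]
  constructor
  · rintro ⟨⟨hh1, hh2⟩, hh3⟩; exact ⟨hh3, hh1⟩
  · rintro ⟨hh1, hh2⟩
    refine ⟨⟨hh2, fun he => ?_⟩, hh1⟩
    subst he; omega

lemma b_not_mem_flt2S (i : ℕ) (b : Fin N) : b ∉ flt2S row i b := by simp [flt2S]

lemma mem_fltS {s : ℕ} {b : Fin N} : b ∈ fltS row s ↔ s < row b := by simp [fltS]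

/-- domain condition on the chain variables -/
def goodY (row : Fin N → ℕ) (y : ESp N) : Prop :=
  ∀ m (b : Fin N), 1 ≤ m → m < row b → gy y m b ≠ 0 ∧ 1 + gy y m b ≠ 0

lemma Xf_ne_zero {y : ESp N} (hy : goodY row y) {j : ℕ} {b : Fin N} (hj : j < row b) :
    Xf j b y ≠ 0 := by
  apply Finset.prod_ne_zero_iff.mpr
  intro m hm
  rcases Finset.mem_Icc.mp hm with ⟨hm1, hm2⟩
  exact div_ne_zero (hy m b hm1 (by omega)).1 (hy m b hm1 (by omega)).2

lemma Gc_zero_eq (hrow1 : ∀ j, 1 ≤ row j) {y : ESp N} (hy : goodY row y)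
    {i : ℕ} {b : Fin N} (h1 : 1 ≤ i) (h2 : i < row b) :
    Gc row i b 0 y
      = gy y i b - (if i + 1 < row b then 1 + gy y (i + 1) b else 0)
        + ((2 * (fcnt row i b : ℤ) - (fcnt row (i + 1) b : ℤ) - (fcnt row (i - 1) b : ℤ) : ℤ) : ℂ) := by
  have hx : Xf i b y ≠ 0 := Xf_ne_zero hy h2
  have hS2 : ∑ b' ∈ flt2S row i b, Q ((b' : ℤ) - (b : ℤ)) (Xf i b y) (Xf i b' y) 0
      = -(fcnt row i b : ℂ) := by
    rw [sum_Q_zero b _ hx, card_flt2S_lt, if_neg (b_not_mem_flt2S i b), add_zero]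
  have hS3 : ∑ b' ∈ fltS row (i + 1), Q ((b' : ℤ) - (b : ℤ)) (Xf i b y) (Xf (i + 1) b' y) 0
      = -(fcnt row (i + 1) b : ℂ) + (if i + 1 < row b then -(1 + gy y (i + 1) b) else 0) := by
    rw [sum_Q_zero b _ hx, card_fltS_lt]
    congr 1
    by_cases h : i + 1 < row b
    · rw [if_pos (mem_fltS.mpr h), if_pos h, Xf_succ]
      exact ratio2 hx (hy (i + 1) b (by omega) h).2
    · rw [if_neg (fun hc => h (mem_fltS.mp hc)), if_neg h]
  rcases Nat.lt_or_ge i 2 with hi2 | hi2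
  · -- i = 1
    have hi1 : i = 1 := by omega
    subst hi1
    have hS1 : ∑ a : Fin N, Q ((a : ℤ) - (b : ℤ)) (Xf 1 b y) 1 0
        = -((b : ℕ) : ℂ) + gy y 1 b := by
      rw [sum_Q_zero b univ hx (fun _ => 1), card_filter_val_lt, if_pos (Finset.mem_univ b)]
      congr 1
      have hone : Xf 1 b y = (1 : ℂ) * (gy y 1 b / (1 + gy y 1 b)) := by
        rw [show (1 : ℕ) = 0 + 1 from rfl, Xf_succ, Xf_zero_idx]
      rw [hone]
      exact ratio1 one_ne_zero (hy 1 b le_rfl h2).2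
    have hf0 : fcnt row 0 b = (b : ℕ) := fcnt_zero (row := row) hrow1 b
    rw [Gc, if_pos rfl, if_neg (by omega), hS1, hS2, hS3]
    have : fcnt row (1 - 1) b = (b : ℕ) := by simpa using hf0
    rw [this]
    by_cases h : 1 + 1 < row b
    · rw [if_pos h, if_pos h]
      push_cast
      ring
    · rw [if_neg h, if_neg h]
      push_cast
      ring
  · -- 2 ≤ i
    have hS4 : ∑ b' ∈ fltS row (i - 1), Q ((b' : ℤ) - (b : ℤ)) (Xf i b y) (Xf (i - 1) b' y) 0
        = -(fcnt row (i - 1) b : ℂ) + gy y i b := by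
      rw [sum_Q_zero b _ hx, card_fltS_lt, if_pos (mem_fltS.mpr (by omega))]
      congr 1
      rw [Xf_pred h1]
      exact ratio1 (Xf_ne_zero hy (show i - 1 < row b by omega)) (hy i b h1 h2).2
    rw [Gc, if_neg (by omega), if_pos hi2, hS2, hS3, hS4]
    by_cases h : i + 1 < row b
    · rw [if_pos h, if_pos h]
      push_cast
      ring
    · rw [if_neg h, if_neg h]
      push_cast
      ring

/-- the full rescaled map `(ε, y) ↦ (ε, G(ε,y))` (identity on dummy coordinates) -/
def Phi (row : Fin N → ℕ) : FullSp N → FullSp N :=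
  fun p => (p.1, fun i b =>
    if 1 ≤ (i : ℕ) ∧ (i : ℕ) < row b then Gc row (i : ℕ) b p.1 p.2 else p.2 i b)

def cvecV (row : Fin N → ℕ) : ESp N := fun i b =>
  if 1 ≤ (i : ℕ) ∧ (i : ℕ) < row b then
    ((2 * (fcnt row (i : ℕ) b : ℤ) - (fcnt row ((i : ℕ) + 1) b : ℤ)
        - (fcnt row ((i : ℕ) - 1) b : ℤ) : ℤ) : ℂ)
      - (if (i : ℕ) + 1 < row b then 1 else 0)
  else 0

def LmapF (row : Fin N → ℕ) : ESp N → ESp N := fun y i b =>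
  if 1 ≤ (i : ℕ) ∧ (i : ℕ) + 1 < row b then y i b - y (((i : ℕ) + 1 : ℕ) : Fin (N + 2)) b
  else y i b

lemma Phi_zero_snd (hrow1 : ∀ j, 1 ≤ row j) {y : ESp N} (hy : goodY row y) :
    (Phi row ((0 : ℂ), y)).2 = cvecV row + LmapF row y := by
  funext i b
  show (if 1 ≤ (i : ℕ) ∧ (i : ℕ) < row b then Gc row (i : ℕ) b 0 y else y i b)
      = (cvecV row + LmapF row y) i b
  show _ = cvecV row i b + LmapF row y i b
  by_cases h : 1 ≤ (i : ℕ) ∧ (i : ℕ) < row b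
  · rw [if_pos h, Gc_zero_eq hrow1 hy h.1 h.2, cvecV, if_pos h, LmapF]
    have hcast : (((i : ℕ) : Fin (N + 2))) = i := Fin.cast_val_eq_self i
    rw [gy, gy, hcast]
    by_cases h2 : (i : ℕ) + 1 < row b
    · rw [if_pos h2, if_pos h2, if_pos ⟨h.1, h2⟩]
      ring
    · rw [if_neg h2, if_neg h2, if_neg (fun hc => h2 hc.2)]
      ring
  · rw [if_neg h, cvecV, if_neg h, LmapF, if_neg (fun hc => h ⟨hc.1, by omega⟩), zero_add]

/-- `LmapF` as a linear map -/
def LmapL (row : Fin N → ℕ) : ESp N →ₗ[ℂ] ESp N where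
  toFun := LmapF row
  map_add' y z := by
    funext i b
    show (if _ then _ else _) = _
    by_cases h : 1 ≤ (i : ℕ) ∧ (i : ℕ) + 1 < row b
    · simp only [LmapF, if_pos h, Pi.add_apply]
      ring
    · simp only [LmapF, if_neg h, Pi.add_apply]
  map_smul' c y := by
    funext i b
    by_cases h : 1 ≤ (i : ℕ) ∧ (i : ℕ) + 1 < row b
    · simp only [LmapF, if_pos h, Pi.smul_apply, RingHom.id_apply, smul_eq_mul]
      ring
    · simp only [LmapF, if_neg h, Pi.smul_apply, RingHom.id_apply, smul_eq_mul]

lemma LmapF_inj (hkN : k ≤ N) (hrowk : ∀ b, row b ≤ k) {y : ESp N}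
    (h : LmapF row y = 0) : y = 0 := by
  have key : ∀ n (i : Fin (N + 2)) (b : Fin N), row b ≤ (i : ℕ) + n → y i b = 0 := by
    intro n
    induction n with
    | zero =>
      intro i b hb
      have hc := congrFun (congrFun h i) b
      rw [LmapF, if_neg (by omega)] at hc
      exact hc
    | succ n ih =>
      intro i b hb
      have hc := congrFun (congrFun h i) b
      by_cases hcc : 1 ≤ (i : ℕ) ∧ (i : ℕ) + 1 < row b
      · rw [LmapF, if_pos hcc] at hc
        have he : y i b = y (((i : ℕ) + 1 : ℕ) : Fin (N + 2)) b := by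
          have := sub_eq_zero.mp hc
          exact this
        rw [he]
        apply ih
        have hval : ((((i : ℕ) + 1 : ℕ) : Fin (N + 2)) : ℕ) = (i : ℕ) + 1 :=
          Fin.val_cast_of_lt (by have := hrowk b; omega)
        rw [hval]
        omega
      · rw [LmapF, if_neg hcc] at hc
        exact hc
  funext i b
  exact key (N + 2) i b (by have := hrowk b; omega)

/-- starting point: the chain variables at `ε = 0` -/
def y0v (row col : Fin N → ℕ) : ESp N := fun i b =>
  if 1 ≤ (i : ℕ) ∧ (i : ℕ) < row b then ((Aint row col (i : ℕ) b : ℤ) : ℂ) else 0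

lemma gy_y0 (hkN : k ≤ N) (hrowk : ∀ b, row b ≤ k) {m : ℕ} {b : Fin N}
    (h1 : 1 ≤ m) (h2 : m < row b) :
    gy (y0v row col) m b = ((Aint row col m b : ℤ) : ℂ) := by
  rw [gy, y0v]
  have hval : (((m : ℕ) : Fin (N + 2)) : ℕ) = m :=
    Fin.val_cast_of_lt (by have := hrowk b; omega)
  rw [if_pos (by rw [hval]; exact ⟨h1, h2⟩), hval]

/-- the rational limit of `x_i^{(b)}` -/
def Xq (row col : Fin N → ℕ) (i : ℕ) (b : Fin N) : ℚ :=
  ∏ m ∈ Finset.Icc 1 i, ((Aint row col m b : ℚ) / (1 + (Aint row col m b : ℚ)))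

lemma Xf_y0 (hkN : k ≤ N) (hrowk : ∀ b, row b ≤ k)
    (hA : ∀ m (b : Fin N), 1 ≤ m → m < row b → 1 ≤ Aint row col m b)
    {i : ℕ} {b : Fin N} (hi : i < row b) :
    Xf i b (y0v row col) = ((Xq row col i b : ℚ) : ℂ) := by
  rw [Xf, Xq]
  push_cast
  apply Finset.prod_congr rfl
  intro m hm
  rcases Finset.mem_Icc.mp hm with ⟨hm1, hm2⟩
  rw [gy_y0 hkN hrowk hm1 (by omega)]

section Xqfacts
variable (hA : ∀ m (b : Fin N), 1 ≤ m → m < row b → 1 ≤ Aint row col m b)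

include hA in
lemma Xq_pos {i : ℕ} {b : Fin N} (hi : i < row b) : 0 < Xq row col i b := by
  apply Finset.prod_pos
  intro m hm
  rcases Finset.mem_Icc.mp hm with ⟨hm1, hm2⟩
  have h := hA m b hm1 (by omega)
  have h0 : (0 : ℚ) < (Aint row col m b : ℚ) := by exact_mod_cast lt_of_lt_of_le zero_lt_one h
  have h1 : (0 : ℚ) < 1 + (Aint row col m b : ℚ) := by linarith
  exact div_pos h0 h1

include hA in
lemma Xq_le_one {i : ℕ} {b : Fin N} (hi : i < row b) : Xq row col i b ≤ 1 := by
  apply Finset.prod_le_one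
  · intro m hm
    rcases Finset.mem_Icc.mp hm with ⟨hm1, hm2⟩
    have h := hA m b hm1 (by omega)
    have h0 : (0 : ℚ) ≤ (Aint row col m b : ℚ) := by exact_mod_cast le_trans zero_le_one h
    positivity
  · intro m hm
    rcases Finset.mem_Icc.mp hm with ⟨hm1, hm2⟩
    have h := hA m b hm1 (by omega)
    have h0 : (1 : ℚ) ≤ (Aint row col m b : ℚ) := by exact_mod_cast h
    rw [div_le_one (by linarith)]
    linarith

lemma Xq_succ (i : ℕ) (b : Fin N) :
    Xq row col (i + 1) b
      = Xq row col i b * ((Aint row col (i + 1) b : ℚ) / (1 + (Aint row col (i + 1) b : ℚ))) :=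
  Finset.prod_Icc_succ_top (by omega) _

include hA in
lemma Xq_succ_lt {i : ℕ} {b : Fin N} (hi : i + 1 < row b) :
    Xq row col (i + 1) b < Xq row col i b := by
  have h := hA (i + 1) b (by omega) hi
  have h0 : (1 : ℚ) ≤ (Aint row col (i + 1) b : ℚ) := by exact_mod_cast h
  have hq : (Aint row col (i + 1) b : ℚ) / (1 + (Aint row col (i + 1) b : ℚ)) < 1 := by
    rw [div_lt_one (by linarith)]
    linarith
  have hpos := Xq_pos hA (show i < row b by omega)
  rw [Xq_succ]
  exact mul_lt_of_lt_one_right hpos hq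

include hA in
lemma Xq_lt_one {i : ℕ} {b : Fin N} (h1 : 1 ≤ i) (hi : i < row b) : Xq row col i b < 1 := by
  obtain ⟨j, rfl⟩ := Nat.exists_eq_add_of_le h1
  have hle : Xq row col j b ≤ 1 := Xq_le_one hA (by omega)
  have hlt : Xq row col (j + 1) b < Xq row col j b := Xq_succ_lt hA (by omega)
  calc Xq row col (1 + j) b = Xq row col (j + 1) b := by rw [Nat.add_comm]
    _ < Xq row col j b := hlt
    _ ≤ 1 := hle

end Xqfacts

section WithHyps
variable (hkN : k ≤ N) (hrowk : ∀ b : Fin N, row b ≤ k)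
  (hA : ∀ m (b : Fin N), 1 ≤ m → m < row b → 1 ≤ Aint row col m b)

include hkN hrowk hA in
lemma goodY_y0 : goodY row (y0v row col) := by
  intro m b h1 h2
  rw [gy_y0 hkN hrowk h1 h2]
  have h := hA m b h1 h2
  constructor
  · exact_mod_cast show ((Aint row col m b : ℤ) : ℂ) ≠ 0 from by
      exact_mod_cast show Aint row col m b ≠ 0 by omega
  · rw [show (1 : ℂ) + ((Aint row col m b : ℤ) : ℂ) = ((1 + Aint row col m b : ℤ) : ℂ) by push_cast; ring]
    exact_mod_cast show (1 + Aint row col m b : ℤ) ≠ 0 by omega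

include hkN hrowk hA in
lemma Gc_y0_zero (hrow1 : ∀ j, 1 ≤ row j) {i : ℕ} {b : Fin N} (h1 : 1 ≤ i) (h2 : i < row b) :
    Gc row i b 0 (y0v row col) = 0 := by
  rw [Gc_zero_eq hrow1 (goodY_y0 hkN hrowk hA) h1 h2, gy_y0 hkN hrowk h1 h2]
  have hch := chain_eq (row := row) (col := col) h1 h2
  by_cases h : i + 1 < row b
  · rw [if_pos h, gy_y0 hkN hrowk (by omega) h]
    rw [if_pos h] at hch
    have hz : Aint row col i b - (1 + Aint row col (i + 1) b)
        + (2 * (fcnt row i b : ℤ) - (fcnt row (i + 1) b : ℤ) - (fcnt row (i - 1) b : ℤ)) = 0 := by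
      omega
    exact_mod_cast hz
  · rw [if_neg h]
    rw [if_neg h] at hch
    have hz : Aint row col i b - 0
        + (2 * (fcnt row i b : ℤ) - (fcnt row (i + 1) b : ℤ) - (fcnt row (i - 1) b : ℤ)) = 0 := by
      omega
    exact_mod_cast hz

include hkN hrowk hA in
lemma Phi_y0 (hrow1 : ∀ j, 1 ≤ row j) : Phi row ((0 : ℂ), y0v row col) = ((0 : ℂ), (0 : ESp N)) := by
  rw [Phi]
  refine Prod.ext rfl ?_
  funext i b
  show (if 1 ≤ (i : ℕ) ∧ (i : ℕ) < row b then _ else _) = _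
  by_cases h : 1 ≤ (i : ℕ) ∧ (i : ℕ) < row b
  · rw [if_pos h]
    exact Gc_y0_zero hkN hrowk hA hrow1 h.1 h.2
  · rw [if_neg h]
    simp only [y0v]
    rw [if_neg h]
    rfl

/-- coordinate evaluation as a continuous linear map -/
def evCLM (N : ℕ) (i : ℕ) (b : Fin N) : FullSp N →L[ℂ] ℂ :=
  (ContinuousLinearMap.proj b).comp ((ContinuousLinearMap.proj ((i : ℕ) : Fin (N + 2))).comp
    (ContinuousLinearMap.snd ℂ ℂ (ESp N)))

lemma evCLM_apply (i : ℕ) (b : Fin N) (p : FullSp N) : evCLM N i b p = gy p.2 i b := rfl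

include hkN hrowk hA in
lemma Xf_contDiffAt {j : ℕ} {b' : Fin N} (hj : j < row b') :
    ContDiffAt ℂ 1 (fun p : FullSp N => Xf j b' p.2) ((0 : ℂ), y0v row col) := by
  have he : (fun p : FullSp N => Xf j b' p.2)
      = fun p => ∏ m ∈ Finset.Icc 1 j, (evCLM N m b' p / (1 + evCLM N m b' p)) := rfl
  rw [he]
  apply contDiffAt_prod
  intro m hm
  rcases Finset.mem_Icc.mp hm with ⟨hm1, hm2⟩
  have hg := goodY_y0 hkN hrowk hA m b' hm1 (by omega)
  refine ContDiffAt.div ((evCLM N m b').contDiff.contDiffAt)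
    (contDiffAt_const.add ((evCLM N m b').contDiff.contDiffAt)) ?_
  exact hg.2

lemma Qden_ne_zero {d : ℤ} {x w : ℂ} (hneg : d < 0 → x ≠ 0) (hzero : d = 0 → w - x ≠ 0)
    (hpos : 0 < d → w ≠ 0) :
    (if 0 ≤ d then w - x * (0 : ℂ) ^ d.toNat else w * (0 : ℂ) ^ (-d).toNat - x) ≠ 0 := by
  rcases lt_trichotomy d 0 with h | h | h
  · rw [if_neg (by omega), zero_pow (by omega : (-d).toNat ≠ 0), mul_zero, zero_sub]
    exact neg_ne_zero.mpr (hneg h)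
  · subst h
    simpa using hzero rfl
  · rw [if_pos h.le, zero_pow (by omega : d.toNat ≠ 0), mul_zero, sub_zero]
    exact hpos h

include hkN hrowk hA in
lemma Gc_contDiffAt {i : ℕ} {b : Fin N} (h1 : 1 ≤ i) (h2 : i < row b) :
    ContDiffAt ℂ 1 (fun p : FullSp N => Gc row i b p.1 p.2) ((0 : ℂ), y0v row col) := by
  have hXib := Xf_contDiffAt hkN hrowk hA h2
  have hxval : Xf i b (y0v row col) = ((Xq row col i b : ℚ) : ℂ) := Xf_y0 hkN hrowk hA h2
  have hxne : Xf i b (y0v row col) ≠ 0 := by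
    rw [hxval]
    exact_mod_cast (Xq_pos hA h2).ne'
  simp only [Gc]
  apply ContDiffAt.add
  apply ContDiffAt.add
  apply ContDiffAt.sub
  · -- the `i = 1` z-sum
    by_cases hi1 : i = 1
    · simp only [if_pos hi1]
      apply ContDiffAt.sum
      intro a _
      refine Q_contDiffAt hXib contDiffAt_const contDiffAt_fst (Qden_ne_zero
        (fun _ => hxne) (fun _ => ?_) (fun _ => one_ne_zero))
      rw [hxval, sub_ne_zero]
      intro hc
      exact absurd (show Xq row col i b = 1 by exact_mod_cast hc.symm)
        (ne_of_lt (Xq_lt_one hA h1 h2))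
    · simp only [if_neg hi1]
      exact contDiffAt_const
  · -- 2 * interaction sum
    apply ContDiffAt.mul contDiffAt_const
    apply ContDiffAt.sum
    intro b' hb'
    rcases Finset.mem_filter.mp hb' with ⟨-, hrb', hne⟩
    refine Q_contDiffAt hXib (Xf_contDiffAt hkN hrowk hA hrb') contDiffAt_fst
      (Qden_ne_zero (fun _ => hxne) (fun hd => absurd (Fin.ext (by omega) : b' = b) hne)
        (fun _ => ?_))
    rw [Xf_y0 hkN hrowk hA hrb']
    exact_mod_cast (Xq_pos hA hrb').ne'
  · -- row `i+1` sum
    apply ContDiffAt.sum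
    intro b' hb'
    have hrb' : i + 1 < row b' := mem_fltS.mp hb'
    refine Q_contDiffAt hXib (Xf_contDiffAt hkN hrowk hA (by omega)) contDiffAt_fst
      (Qden_ne_zero (fun _ => hxne) (fun hd => ?_) (fun _ => ?_))
    · have hab : b' = b := Fin.ext (by omega)
      subst hab
      rw [hxval, Xf_y0 hkN hrowk hA (by omega : i + 1 < row b'), sub_ne_zero]
      exact_mod_cast (Xq_succ_lt hA hrb').ne
    · rw [Xf_y0 hkN hrowk hA (by omega : i + 1 < row b')]
      exact_mod_cast (Xq_pos hA (by omega : i + 1 < row b')).ne'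
  · -- row `i-1` sum
    by_cases hi2 : 2 ≤ i
    · simp only [if_pos hi2]
      apply ContDiffAt.sum
      intro b' hb'
      have hrb' : i - 1 < row b' := mem_fltS.mp hb'
      refine Q_contDiffAt hXib (Xf_contDiffAt hkN hrowk hA hrb') contDiffAt_fst
        (Qden_ne_zero (fun _ => hxne) (fun hd => ?_) (fun _ => ?_))
      · have hab : b' = b := Fin.ext (by omega)
        subst hab
        rw [hxval, Xf_y0 hkN hrowk hA hrb', sub_ne_zero]
        have : Xq row col (i - 1 + 1) b' < Xq row col (i - 1) b' :=
          Xq_succ_lt hA (by omega)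
        rw [show i - 1 + 1 = i by omega] at this
        exact_mod_cast this.ne'
      · rw [Xf_y0 hkN hrowk hA hrb']
        exact_mod_cast (Xq_pos hA hrb').ne'
    · simp only [if_neg hi2]
      exact contDiffAt_const

include hkN hrowk hA in
lemma Phi_contDiffAt : ContDiffAt ℂ 1 (Phi row) ((0 : ℂ), y0v row col) := by
  apply ContDiffAt.prodMk contDiffAt_fst
  rw [contDiffAt_pi]
  intro i
  rw [contDiffAt_pi]
  intro b
  by_cases h : 1 ≤ (i : ℕ) ∧ (i : ℕ) < row b
  · simp only [if_pos h]
    exact Gc_contDiffAt hkN hrowk hA h.1 h.2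
  · simp only [if_neg h]
    exact ((ContinuousLinearMap.proj b).comp ((ContinuousLinearMap.proj i).comp
      (ContinuousLinearMap.snd ℂ ℂ (ESp N)))).contDiff.contDiffAt

include hkN hrowk hA in
lemma eventually_goodY : ∀ᶠ y in nhds (y0v row col), goodY row y := by
  have hall : ∀ᶠ y in nhds (y0v row col), ∀ m ∈ Finset.range (N + 2), ∀ b : Fin N,
      1 ≤ m → m < row b → (gy y m b ≠ 0 ∧ 1 + gy y m b ≠ 0) := by
    rw [Filter.eventually_all_finset]
    intro m hm
    rw [Filter.eventually_all]
    intro b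
    by_cases hmb : 1 ≤ m ∧ m < row b
    · have c1 : Continuous (fun y : ESp N => gy y m b) :=
        (continuous_apply b).comp (continuous_apply _)
      have hg := goodY_y0 hkN hrowk hA m b hmb.1 hmb.2
      have e1 := c1.continuousAt.eventually_ne (x := y0v row col) hg.1
      have e2 := (continuous_const.add c1).continuousAt.eventually_ne (x := y0v row col) hg.2
      filter_upwards [e1, e2] with y hy1 hy2 _ _
      exact ⟨hy1, hy2⟩
    · filter_upwards with y h1 h2
      exact absurd ⟨h1, h2⟩ hmb
  filter_upwards [hall] with y hy
  intro m b h1 h2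
  exact hy m (Finset.mem_range.mpr (by have := hrowk b; omega)) b h1 h2

include hkN hrowk hA in
lemma exists_Yf (hrow1 : ∀ j, 1 ≤ row j) :
    ∃ Yf : ℝ → ESp N,
      Tendsto Yf (nhds 0) (nhds (y0v row col)) ∧
      (∀ᶠ ε : ℝ in nhds 0, ∀ i (b : Fin N), 1 ≤ i → i < row b →
        Gc row i b (↑ε) (Yf ε) = 0) := by
  classical
  set pt : FullSp N := ((0 : ℂ), y0v row col) with hpt
  have hC : ContDiffAt ℂ 1 (Phi row) pt := Phi_contDiffAt hkN hrowk hA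
  have hS : HasStrictFDerivAt (Phi row) (fderiv ℂ (Phi row) pt) pt :=
    hC.hasStrictFDerivAt one_ne_zero
  set f' : FullSp N →L[ℂ] FullSp N := fderiv ℂ (Phi row) pt with hf'
  -- first coordinate of the derivative
  have hfst : ∀ v : FullSp N, (f' v).1 = v.1 := by
    have h1 : HasFDerivAt (fun p : FullSp N => (Phi row p).1)
        ((ContinuousLinearMap.fst ℂ ℂ (ESp N)).comp f') pt := hS.hasFDerivAt.fst
    have h2 : HasFDerivAt (fun p : FullSp N => (Phi row p).1)
        (ContinuousLinearMap.fst ℂ ℂ (ESp N)) pt := hasFDerivAt_fst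
    have := h1.unique h2
    intro v
    exact congrArg (fun (T : FullSp N →L[ℂ] ℂ) => T v) this
  -- derivative in the `y` directions
  set jL : ESp N →L[ℂ] FullSp N := ContinuousLinearMap.inr ℂ ℂ (ESp N) with hjL
  set LmapCL : ESp N →L[ℂ] ESp N := LinearMap.toContinuousLinearMap (LmapL row) with hLCL
  have hsnd : ∀ y : ESp N, f' ((0 : ℂ), y) = ((0 : ℂ), LmapF row y) := by
    have hcomp : HasFDerivAt (fun y : ESp N => Phi row ((0 : ℂ), y)) (f'.comp jL)
        (y0v row col) :=
      HasFDerivAt.comp (y0v row col) hS.hasFDerivAt jL.hasFDerivAt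
    have hAff : HasFDerivAt (fun y : ESp N => (((0 : ℂ), cvecV row) + jL (LmapCL y)))
        (jL.comp LmapCL) (y0v row col) :=
      (jL.comp LmapCL).hasFDerivAt.const_add _
    have hev : (fun y : ESp N => Phi row ((0 : ℂ), y))
        =ᶠ[nhds (y0v row col)] (fun y => (((0 : ℂ), cvecV row) + jL (LmapCL y))) := by
      filter_upwards [eventually_goodY hkN hrowk hA] with y hy
      have h2 := Phi_zero_snd hrow1 hy
      refine Prod.ext (by show (0 : ℂ) = _; simp [hjL]) ?_
      rw [show (Phi row ((0 : ℂ), y)).2 = cvecV row + LmapF row y from h2]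
      rfl
    have hcomp' : HasFDerivAt (fun y : ESp N => Phi row ((0 : ℂ), y)) (jL.comp LmapCL)
        (y0v row col) := (Filter.EventuallyEq.hasFDerivAt_iff hev).mpr hAff
    have huniq : f'.comp jL = jL.comp LmapCL := hcomp.unique hcomp'
    intro y
    have := congrArg (fun (T : ESp N →L[ℂ] FullSp N) => T y) huniq
    exact this
  -- bijectivity
  have hzero : ∀ v : FullSp N, f' v = 0 → v = 0 := by
    intro v hv
    have h1 : v.1 = 0 := by rw [← hfst v, hv]; rfl
    have hv2 : v = ((0 : ℂ), v.2) := by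
      rw [← h1]
    rw [hv2] at hv
    rw [hsnd v.2] at hv
    have : LmapF row v.2 = 0 := congrArg Prod.snd hv
    have := LmapF_inj hkN hrowk this
    rw [hv2, this]
    rfl
  have hinj : Function.Injective f' := by
    intro v w h
    have := hzero (v - w) (by rw [map_sub, h, sub_self])
    exact sub_eq_zero.mp this
  have hsurj : Function.Surjective f' :=
    (LinearMap.injective_iff_surjective (f := f'.toLinearMap)).mp hinj
  set A : FullSp N ≃L[ℂ] FullSp N :=
    (LinearEquiv.ofBijective f'.toLinearMap ⟨hinj, hsurj⟩).toContinuousLinearEquiv with hA'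
  have hcoe : (A : FullSp N →L[ℂ] FullSp N) = f' := by
    apply ContinuousLinearMap.ext
    intro v
    rfl
  have hS' : HasStrictFDerivAt (Phi row) (A : FullSp N →L[ℂ] FullSp N) pt := by
    rw [hcoe]; exact hS
  set inv := hS'.localInverse (Phi row) A pt with hinv
  have hPhi0 : Phi row pt = ((0 : ℂ), (0 : ESp N)) := Phi_y0 hkN hrowk hA hrow1
  have hr : Tendsto (fun ε : ℝ => (((ε : ℂ), (0 : ESp N)) : FullSp N)) (nhds 0)
      (nhds ((0 : ℂ), (0 : ESp N))) := by
    have : Continuous (fun ε : ℝ => (((ε : ℂ), (0 : ESp N)) : FullSp N)) :=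
      Complex.continuous_ofReal.prodMk continuous_const
    simpa using this.tendsto 0
  refine ⟨fun ε => (inv ((ε : ℂ), (0 : ESp N))).2, ?_, ?_⟩
  · have hci : ContinuousAt inv ((0 : ℂ), (0 : ESp N)) := by
      have := hS'.localInverse_continuousAt
      rwa [hPhi0] at this
    have hval : inv ((0 : ℂ), (0 : ESp N)) = pt := by
      have := hS'.localInverse_apply_image
      rwa [hPhi0] at this
    have : Tendsto (fun ε : ℝ => inv ((ε : ℂ), (0 : ESp N))) (nhds 0) (nhds pt) := by
      have h1 := hci.tendsto
      rw [hval] at h1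
      exact h1.comp hr
    exact (continuous_snd.tendsto pt).comp this
  · have hre := hS'.eventually_right_inverse
    rw [hPhi0] at hre
    have := hr.eventually hre
    filter_upwards [this] with ε hε
    intro i b h1 h2
    have hfirst : (inv ((ε : ℂ), (0 : ESp N))).1 = (ε : ℂ) := congrArg Prod.fst hε
    have hsnd' : (Phi row (inv ((ε : ℂ), (0 : ESp N)))).2 = 0 := congrArg Prod.snd hε
    have hvali : (((i : ℕ) : Fin (N + 2)) : ℕ) = i :=
      Fin.val_cast_of_lt (by have := hrowk b; omega)
    have hcomp := congrFun (congrFun hsnd' ((i : ℕ) : Fin (N + 2))) b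
    rw [show (Phi row (inv ((ε : ℂ), (0 : ESp N)))).2 ((i : ℕ) : Fin (N + 2)) b
        = if 1 ≤ (((i : ℕ) : Fin (N + 2)) : ℕ) ∧ (((i : ℕ) : Fin (N + 2)) : ℕ) < row b
          then Gc row (((i : ℕ) : Fin (N + 2)) : ℕ) b (inv ((ε : ℂ), (0 : ESp N))).1
            (inv ((ε : ℂ), (0 : ESp N))).2
          else (inv ((ε : ℂ), (0 : ESp N))).2 ((i : ℕ) : Fin (N + 2)) b from rfl,
      hvali, if_pos ⟨h1, h2⟩, hfirst] at hcomp
    exact hcomp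

end WithHyps

lemma inv_mul_T {U : ℂ} (hU : U ≠ 0) (m p : ℕ) (x w : ℂ) :
    (w * U ^ p - x * U ^ m)⁻¹ * (x * U ^ m) = Q ((p : ℤ) - (m : ℤ)) x w U⁻¹ := by
  rw [mul_comm, ← div_eq_mul_inv, ← Q_inv_eq hU]

lemma inv_mul_T_neg {U : ℂ} (hU : U ≠ 0) (m p : ℕ) (x w : ℂ) :
    (x * U ^ m - w * U ^ p)⁻¹ * (x * U ^ m) = -Q ((p : ℤ) - (m : ℤ)) x w U⁻¹ := by
  rw [show x * U ^ m - w * U ^ p = -(w * U ^ p - x * U ^ m) by ring, inv_neg, neg_mul,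
    inv_mul_T hU]

lemma Bethe_eq {u : ℝ} (hu : ((u : ℝ) : ℂ) ≠ 0) {y : ESp N} {i : ℕ} {b : Fin N}
    (h1 : 1 ≤ i) (hx : Xf i b y ≠ 0)
    (hG : Gc row i b (((u : ℝ) : ℂ))⁻¹ y = 0) :
    (if i = 1 then ∑ a : Fin N, (((u : ℝ) : ℂ) ^ ((a : ℕ) + 1)
        - ((u : ℝ) : ℂ) ^ ((b : ℕ) + 1) * Xf 1 b y)⁻¹ else 0)
      + 2 * ∑ b' ∈ Finset.univ.filter (fun b' : Fin N => i < row b' ∧ b' ≠ b),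
          (((u : ℝ) : ℂ) ^ ((b : ℕ) + 1) * Xf i b y
            - ((u : ℝ) : ℂ) ^ ((b' : ℕ) + 1) * Xf i b' y)⁻¹
      - ∑ b' ∈ Finset.univ.filter (fun b' : Fin N => i + 1 < row b'),
          (((u : ℝ) : ℂ) ^ ((b : ℕ) + 1) * Xf i b y
            - ((u : ℝ) : ℂ) ^ ((b' : ℕ) + 1) * Xf (i + 1) b' y)⁻¹
      - (if 2 ≤ i then ∑ b' ∈ Finset.univ.filter (fun b' : Fin N => i - 1 < row b'),
          (((u : ℝ) : ℂ) ^ ((b : ℕ) + 1) * Xf i b y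
            - ((u : ℝ) : ℂ) ^ ((b' : ℕ) + 1) * Xf (i - 1) b' y)⁻¹ else 0) = 0 := by
  set U : ℂ := ((u : ℝ) : ℂ) with hUdef
  set T : ℂ := U ^ ((b : ℕ) + 1) * Xf i b y with hTdef
  have hTswap : T = Xf i b y * U ^ ((b : ℕ) + 1) := mul_comm _ _
  have hTne : T ≠ 0 := mul_ne_zero (pow_ne_zero _ hu) hx
  have hd : ∀ a : Fin N, ((((a : ℕ) + 1 : ℕ)) : ℤ) - (((b : ℕ) + 1 : ℕ) : ℤ)
      = ((a : ℕ) : ℤ) - ((b : ℕ) : ℤ) := by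
    intro a; push_cast; ring
  have eA : (if i = 1 then ∑ a : Fin N, (U ^ ((a : ℕ) + 1) - T)⁻¹ else 0) * T
      = (if i = 1 then ∑ a : Fin N, Q ((a : ℤ) - (b : ℤ)) (Xf i b y) 1 U⁻¹ else 0) := by
    by_cases hi : i = 1
    · rw [if_pos hi, if_pos hi, Finset.sum_mul]
      refine Finset.sum_congr rfl (fun a _ => ?_)
      rw [hTswap, show U ^ ((a : ℕ) + 1) = 1 * U ^ ((a : ℕ) + 1) from (one_mul _).symm,
        inv_mul_T hu, hd a, hi]
    · rw [if_neg hi, if_neg hi, zero_mul]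
  have eB : (∑ b' ∈ Finset.univ.filter (fun b' : Fin N => i < row b' ∧ b' ≠ b),
        (T - U ^ ((b' : ℕ) + 1) * Xf i b' y)⁻¹) * T
      = -∑ b' ∈ flt2S row i b, Q ((b' : ℤ) - (b : ℤ)) (Xf i b y) (Xf i b' y) U⁻¹ := by
    rw [Finset.sum_mul, ← Finset.sum_neg_distrib]
    refine Finset.sum_congr rfl (fun b' _ => ?_)
    rw [hTswap, show U ^ ((b' : ℕ) + 1) * Xf i b' y = Xf i b' y * U ^ ((b' : ℕ) + 1) from
      mul_comm _ _, inv_mul_T_neg hu, hd b']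
  have eC : (∑ b' ∈ Finset.univ.filter (fun b' : Fin N => i + 1 < row b'),
        (T - U ^ ((b' : ℕ) + 1) * Xf (i + 1) b' y)⁻¹) * T
      = -∑ b' ∈ fltS row (i + 1), Q ((b' : ℤ) - (b : ℤ)) (Xf i b y) (Xf (i + 1) b' y) U⁻¹ := by
    rw [Finset.sum_mul, ← Finset.sum_neg_distrib]
    refine Finset.sum_congr rfl (fun b' _ => ?_)
    rw [hTswap, show U ^ ((b' : ℕ) + 1) * Xf (i + 1) b' y = Xf (i + 1) b' y * U ^ ((b' : ℕ) + 1)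
      from mul_comm _ _, inv_mul_T_neg hu, hd b']
  have eD : (if 2 ≤ i then ∑ b' ∈ Finset.univ.filter (fun b' : Fin N => i - 1 < row b'),
        (T - U ^ ((b' : ℕ) + 1) * Xf (i - 1) b' y)⁻¹ else 0) * T
      = -(if 2 ≤ i then ∑ b' ∈ fltS row (i - 1),
          Q ((b' : ℤ) - (b : ℤ)) (Xf i b y) (Xf (i - 1) b' y) U⁻¹ else 0) := by
    by_cases hi : 2 ≤ i
    · rw [if_pos hi, if_pos hi, Finset.sum_mul, ← Finset.sum_neg_distrib]
      refine Finset.sum_congr rfl (fun b' _ => ?_)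
      rw [hTswap, show U ^ ((b' : ℕ) + 1) * Xf (i - 1) b' y = Xf (i - 1) b' y * U ^ ((b' : ℕ) + 1)
        from mul_comm _ _, inv_mul_T_neg hu, hd b']
    · rw [if_neg hi, if_neg hi, zero_mul, neg_zero]
  have key : ((if i = 1 then ∑ a : Fin N, (U ^ ((a : ℕ) + 1) - T)⁻¹ else 0)
      + 2 * ∑ b' ∈ Finset.univ.filter (fun b' : Fin N => i < row b' ∧ b' ≠ b),
          (T - U ^ ((b' : ℕ) + 1) * Xf i b' y)⁻¹
      - ∑ b' ∈ Finset.univ.filter (fun b' : Fin N => i + 1 < row b'),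
          (T - U ^ ((b' : ℕ) + 1) * Xf (i + 1) b' y)⁻¹
      - (if 2 ≤ i then ∑ b' ∈ Finset.univ.filter (fun b' : Fin N => i - 1 < row b'),
          (T - U ^ ((b' : ℕ) + 1) * Xf (i - 1) b' y)⁻¹ else 0)) * T
      = Gc row i b U⁻¹ y := by
    rw [Gc, sub_mul, sub_mul, add_mul, mul_assoc 2, eA, eB, eC, eD]
    ring
  have hzero : ((if i = 1 then ∑ a : Fin N, (U ^ ((a : ℕ) + 1) - T)⁻¹ else 0)
      + 2 * ∑ b' ∈ Finset.univ.filter (fun b' : Fin N => i < row b' ∧ b' ≠ b),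
          (T - U ^ ((b' : ℕ) + 1) * Xf i b' y)⁻¹
      - ∑ b' ∈ Finset.univ.filter (fun b' : Fin N => i + 1 < row b'),
          (T - U ^ ((b' : ℕ) + 1) * Xf (i + 1) b' y)⁻¹
      - (if 2 ≤ i then ∑ b' ∈ Finset.univ.filter (fun b' : Fin N => i - 1 < row b'),
          (T - U ^ ((b' : ℕ) + 1) * Xf (i - 1) b' y)⁻¹ else 0)) * T = 0 := by
    rw [key]
    exact hG
  have := (mul_eq_zero.mp hzero).resolve_right hTne
  by_cases hi : i = 1
  · rw [if_pos hi] at this ⊢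
    rw [show Xf 1 b y = Xf i b y by rw [hi]]
    exact this
  · rw [if_neg hi] at this ⊢
    exact this

lemma pow_mul_invpow {ε : ℂ} (hε : ε ≠ 0) {m p : ℕ} (h : m ≤ p) :
    ε ^ p * (ε⁻¹) ^ m = ε ^ (p - m) := by
  rw [inv_pow, mul_inv_eq_iff_eq_mul₀ (pow_ne_zero _ hε), ← pow_add]
  congr 1
  omega

lemma eventually_mono_ne {x1 x2 : ℝ → ℂ} {c1 c2 : ℂ} (m p : ℕ)
    (h1 : Tendsto x1 (nhdsWithin (0:ℝ) (Set.Ioi 0)) (nhds c1))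
    (h2 : Tendsto x2 (nhdsWithin (0:ℝ) (Set.Ioi 0)) (nhds c2))
    (hc1 : c1 ≠ 0) (hc2 : c2 ≠ 0) (hmp : m = p → c1 ≠ c2) :
    ∀ᶠ ε : ℝ in nhdsWithin (0:ℝ) (Set.Ioi 0),
      ((ε : ℂ))⁻¹ ^ m * x1 ε ≠ ((ε : ℂ))⁻¹ ^ p * x2 ε := by
  have hεne : ∀ᶠ ε : ℝ in nhdsWithin (0:ℝ) (Set.Ioi 0), (ε : ℂ) ≠ 0 := by
    filter_upwards [self_mem_nhdsWithin] with ε hε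
    exact Complex.ofReal_ne_zero.mpr (ne_of_gt hε)
  have hεto0 : Tendsto (fun ε : ℝ => (ε : ℂ)) (nhdsWithin (0:ℝ) (Set.Ioi 0)) (nhds 0) := by
    have := (Complex.continuous_ofReal.tendsto 0).mono_left
      (nhdsWithin_le_nhds (s := Set.Ioi (0:ℝ)))
    simpa using this
  rcases lt_trichotomy m p with h | h | h
  · have hkey : Tendsto (fun ε : ℝ => x2 ε - ((ε : ℂ)) ^ (p - m) * x1 ε)
        (nhdsWithin (0:ℝ) (Set.Ioi 0)) (nhds (c2 - (0 : ℂ) ^ (p - m) * c1)) :=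
      h2.sub ((hεto0.pow _).mul h1)
    rw [zero_pow (by omega : p - m ≠ 0), zero_mul, sub_zero] at hkey
    filter_upwards [hkey.eventually_ne hc2, hεne] with ε hne hε heq
    apply hne
    have := congrArg (fun z => ((ε : ℂ)) ^ p * z) heq
    simp only [← mul_assoc] at this
    rw [pow_mul_invpow hε (le_of_lt h), pow_mul_invpow hε le_rfl, Nat.sub_self, pow_zero,
      one_mul] at this
    rw [sub_eq_zero]
    exact this.symm
  · subst h
    have hkey : Tendsto (fun ε : ℝ => x1 ε - x2 ε)
        (nhdsWithin (0:ℝ) (Set.Ioi 0)) (nhds (c1 - c2)) := h1.sub h2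
    filter_upwards [hkey.eventually_ne (sub_ne_zero.mpr (hmp rfl)), hεne] with ε hne hε heq
    apply hne
    have := congrArg (fun z => ((ε : ℂ)) ^ m * z) heq
    simp only [← mul_assoc] at this
    rw [pow_mul_invpow hε le_rfl, Nat.sub_self, pow_zero, one_mul, one_mul] at this
    rw [sub_eq_zero]
    exact this
  · have hkey : Tendsto (fun ε : ℝ => x1 ε - ((ε : ℂ)) ^ (m - p) * x2 ε)
        (nhdsWithin (0:ℝ) (Set.Ioi 0)) (nhds (c1 - (0 : ℂ) ^ (m - p) * c2)) :=
      h1.sub ((hεto0.pow _).mul h2)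
    rw [zero_pow (by omega : m - p ≠ 0), zero_mul, sub_zero] at hkey
    filter_upwards [hkey.eventually_ne hc1, hεne] with ε hne hε heq
    apply hne
    have := congrArg (fun z => ((ε : ℂ)) ^ m * z) heq
    simp only [← mul_assoc] at this
    rw [pow_mul_invpow hε le_rfl, pow_mul_invpow hε (le_of_lt h), Nat.sub_self, pow_zero,
      one_mul] at this
    rw [sub_eq_zero]
    exact this

/-- the rational value `1/(Xq 1 b - 1) = -(1 + A_1)` -/
lemma Xq_one_formula {b : Fin N}
    (hA1 : 1 ≤ Aint row col 1 b) :
    ((1 : ℂ)) / (((Xq row col 1 b : ℚ) : ℂ) - 1) = -(1 + ((Aint row col 1 b : ℤ) : ℂ)) := by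
  have h1 : Xq row col 1 b = (Aint row col 1 b : ℚ) / (1 + (Aint row col 1 b : ℚ)) := by
    rw [Xq]
    rw [show Finset.Icc 1 1 = {1} from rfl, Finset.prod_singleton]
  have hAq : (1 : ℚ) ≤ (Aint row col 1 b : ℚ) := by exact_mod_cast hA1
  have hden : (1 : ℚ) + (Aint row col 1 b : ℚ) ≠ 0 := by linarith
  have h2 : (Xq row col 1 b : ℚ) - 1 = -(1 / (1 + (Aint row col 1 b : ℚ))) := by
    rw [h1]
    field_simp
    ring
  have h3 : ((Xq row col 1 b : ℚ) : ℂ) - 1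
      = -((1 : ℂ) / (1 + ((Aint row col 1 b : ℤ) : ℂ))) := by
    rw [show ((1:ℂ)) = ((1:ℚ):ℂ) by norm_num] at *
    push_cast
    push_cast at h2
    exact_mod_cast congrArg (fun q : ℚ => (q : ℂ)) h2
  rw [h3]
  have hdenC : (1 : ℂ) + ((Aint row col 1 b : ℤ) : ℂ) ≠ 0 := by
    have : ((1 + Aint row col 1 b : ℤ) : ℂ) ≠ 0 := by
      exact_mod_cast show (1 + Aint row col 1 b : ℤ) ≠ 0 by omega
    push_cast at this
    exact this
  rw [div_neg, one_div, inv_div, div_one]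

end Main
end AC

open AC

/-- Theorem `thm:critical`, existence part, in the asymptotic zone
`z(u) = (u, u², …, u^N)`: let `λ = (λ_1 ≥ … ≥ λ_k ≥ 1)` be a partition of `N`
(1-indexed parts) and `T` a standard labeling of `Y(λ)`, encoded by its inverse
`j ↦ (row j, col j)` (1-indexed rows and columns).  The Bethe variables of row index `i`
are indexed by the boxes lying strictly below row `i`; since boxes correspond to their
labels, `t i b` denotes `t_i^{(T⁻¹(b))}`.  Then there are `u₀ > 0` and functions
`t i b : (u₀,∞) → ℂ` such that:
(a) for every `u > u₀`, `t(u)` is a critical point of the master function `S(·, z(u))`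
    (domain conditions and vanishing of all partials `∂S/∂t_i^{(b)}`);
(b) for each `(i,b)` there is a rational `0 < β < 1` with `t i b (u)/u^{T(b)} → β`;
(c) for each `j`, `z_j(u)·(Σ_{ℓ≠j}(z_j(u)−z_ℓ(u))⁻¹ − Σ_b (z_j(u)−t_1^{(b)}(u))⁻¹)`
    tends to the content `c(T,j) = y(T,j) − x(T,j)` as `u → ∞`. -/
theorem asymptotic_critical_points (N k : ℕ) (hN : 0 < N) (hk : 1 ≤ k)
    (lam : ℕ → ℕ)
    (hmono : ∀ i j : ℕ, 1 ≤ i → i ≤ j → j ≤ k → lam j ≤ lam i)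
    (hpos : 1 ≤ lam k)
    (hsum : ∑ i ∈ Finset.Icc 1 k, lam i = N)
    (row col : Fin N → ℕ)
    (hbox : ∀ j : Fin N, 1 ≤ row j ∧ row j ≤ k ∧ 1 ≤ col j ∧ col j ≤ lam (row j))
    (hinj : Function.Injective (fun j : Fin N => (row j, col j)))
    (hstdrow : ∀ j j' : Fin N, row j = row j' → col j < col j' → j < j')
    (hstdcol : ∀ j j' : Fin N, col j = col j' → row j < row j' → j < j') :
    ∃ (u₀ : ℝ) (t : ℕ → Fin N → ℝ → ℂ), 0 < u₀ ∧
      (∀ u : ℝ, u > u₀ →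
        ((∀ a : Fin N, ∀ b : Fin N, 1 < row b →
            t 1 b u ≠ (u : ℂ) ^ ((a : ℕ) + 1)) ∧
         (∀ i ∈ Finset.Icc 1 (k - 1), ∀ b b' : Fin N, i < row b → i < row b' →
            b ≠ b' → t i b u ≠ t i b' u) ∧
         (∀ i ∈ Finset.Icc 1 (k - 1), ∀ b b' : Fin N, i < row b → i + 1 < row b' →
            t i b u ≠ t (i + 1) b' u) ∧
         (∀ i ∈ Finset.Icc 1 (k - 1), ∀ b : Fin N, i < row b →
            (if i = 1 then ∑ a : Fin N, ((u : ℂ) ^ ((a : ℕ) + 1) - t 1 b u)⁻¹ else 0)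
              + 2 * ∑ b' ∈ Finset.univ.filter
                  (fun b' : Fin N => i < row b' ∧ b' ≠ b), (t i b u - t i b' u)⁻¹
              - ∑ b' ∈ Finset.univ.filter
                  (fun b' : Fin N => i + 1 < row b'), (t i b u - t (i + 1) b' u)⁻¹
              - (if 2 ≤ i then ∑ b' ∈ Finset.univ.filter
                  (fun b' : Fin N => i - 1 < row b'), (t i b u - t (i - 1) b' u)⁻¹
                 else 0)
              = 0))) ∧
      (∀ i ∈ Finset.Icc 1 (k - 1), ∀ b : Fin N, i < row b →
        ∃ β : ℚ, 0 < β ∧ β < 1 ∧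
          Tendsto (fun u : ℝ => t i b u / (u : ℂ) ^ ((b : ℕ) + 1))
            atTop (nhds ((β : ℂ)))) ∧
      (∀ j : Fin N,
        Tendsto (fun u : ℝ =>
            (u : ℂ) ^ ((j : ℕ) + 1) *
              ((∑ l ∈ Finset.univ.erase j,
                  ((u : ℂ) ^ ((j : ℕ) + 1) - (u : ℂ) ^ ((l : ℕ) + 1))⁻¹)
                - ∑ b ∈ Finset.univ.filter (fun b : Fin N => 1 < row b),
                    ((u : ℂ) ^ ((j : ℕ) + 1) - t 1 b u)⁻¹))
          atTop (nhds (((col j : ℤ) - (row j : ℤ) : ℤ) : ℂ))) := by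
  classical
  have hrow1 : ∀ j, 1 ≤ row j := fun j => (hbox j).1
  have hrowk : ∀ j, row j ≤ k := fun j => (hbox j).2.1
  have hkN : k ≤ N := k_le_N hk hmono hpos hsum
  have hA : ∀ m (b : Fin N), 1 ≤ m → m < row b → 1 ≤ Aint row col m b :=
    fun m b h1 h2 => Aint_pos hmono hsum hbox hinj hstdrow hstdcol h1 h2
  obtain ⟨Yf, hYtend, hGcEv⟩ := exists_Yf hkN hrowk hA hrow1
  set tfun : ℕ → Fin N → ℝ → ℂ :=
    fun i b u => ((u : ℂ)) ^ ((b : ℕ) + 1) * Xf i b (Yf u⁻¹) with htfun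
  -- limit of `Xf` along the implicit-function branch
  have hXT : ∀ (m : ℕ) (b : Fin N), m < row b →
      Tendsto (fun ε : ℝ => Xf m b (Yf ε)) (nhds (0 : ℝ))
        (nhds ((Xq row col m b : ℚ) : ℂ)) := by
    intro m b hm
    have h0 : ContinuousAt (fun p : FullSp N => Xf m b p.2) ((0 : ℂ), y0v row col) :=
      (Xf_contDiffAt hkN hrowk hA hm).continuousAt
    have hcont : Continuous (fun y : ESp N => (((0 : ℂ), y) : FullSp N)) :=
      continuous_const.prodMk continuous_id
    have h1 : ContinuousAt (fun y : ESp N => Xf m b y) (y0v row col) :=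
      h0.comp hcont.continuousAt
    rw [← Xf_y0 hkN hrowk hA hm]
    exact h1.tendsto.comp hYtend
  -- part (b)
  have partB : ∀ i ∈ Finset.Icc 1 (k - 1), ∀ b : Fin N, i < row b →
      ∃ β : ℚ, 0 < β ∧ β < 1 ∧
        Tendsto (fun u : ℝ => tfun i b u / (u : ℂ) ^ ((b : ℕ) + 1))
          atTop (nhds ((β : ℂ))) := by
    intro i hi b hb
    rcases Finset.mem_Icc.mp hi with ⟨hi1, -⟩
    refine ⟨Xq row col i b, Xq_pos hA hb, Xq_lt_one hA hi1 hb, ?_⟩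
    have hT : Tendsto (fun u : ℝ => Xf i b (Yf u⁻¹)) atTop
        (nhds ((Xq row col i b : ℚ) : ℂ)) :=
      (hXT i b hb).comp tendsto_inv_atTop_zero
    refine hT.congr' ?_
    filter_upwards [eventually_ge_atTop (1 : ℝ)] with u hu
    have hne : ((u : ℂ)) ^ ((b : ℕ) + 1) ≠ 0 :=
      pow_ne_zero _ (Complex.ofReal_ne_zero.mpr (by linarith))
    rw [htfun]
    rw [mul_div_cancel_left₀ _ hne]
  -- limit of the complex "ε" along u → ∞
  have hginv : Tendsto (fun u : ℝ => ((u : ℂ))⁻¹) atTop (nhds 0) := by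
    have h0 : Tendsto (fun u : ℝ => ((u⁻¹ : ℝ) : ℂ)) atTop (nhds (((0 : ℝ) : ℂ))) :=
      (Complex.continuous_ofReal.tendsto _).comp (tendsto_inv_atTop_zero (𝕜 := ℝ))
    simpa [Complex.ofReal_inv] using h0
  -- part (c)
  have partC : ∀ j : Fin N,
      Tendsto (fun u : ℝ =>
          (u : ℂ) ^ ((j : ℕ) + 1) *
            ((∑ l ∈ Finset.univ.erase j,
                ((u : ℂ) ^ ((j : ℕ) + 1) - (u : ℂ) ^ ((l : ℕ) + 1))⁻¹)
              - ∑ b ∈ Finset.univ.filter (fun b : Fin N => 1 < row b),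
                  ((u : ℂ) ^ ((j : ℕ) + 1) - tfun 1 b u)⁻¹))
        atTop (nhds (((col j : ℤ) - (row j : ℤ) : ℤ) : ℂ)) := by
    intro j
    have hS1lim : Tendsto (fun u : ℝ => ∑ l ∈ Finset.univ.erase j,
        -Q ((l : ℤ) - (j : ℤ)) 1 1 ((u : ℂ))⁻¹) atTop
        (nhds (∑ l ∈ Finset.univ.erase j, -Q ((l : ℤ) - (j : ℤ)) 1 1 0)) := by
      apply tendsto_finset_sum
      intro l hl
      have hlj : l ≠ j := Finset.mem_erase.mp hl |>.1
      refine (Q_tendsto tendsto_const_nhds hginv (Qden_ne_zero (fun _ => one_ne_zero)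
        (fun hd => absurd (Fin.ext (by omega) : l = j) hlj) (fun _ => one_ne_zero))).neg
    have hS2lim : Tendsto (fun u : ℝ => ∑ b ∈ Finset.univ.filter (fun b : Fin N => 1 < row b),
        -Q ((b : ℤ) - (j : ℤ)) 1 (Xf 1 b (Yf u⁻¹)) ((u : ℂ))⁻¹) atTop
        (nhds (∑ b ∈ Finset.univ.filter (fun b : Fin N => 1 < row b),
          -Q ((b : ℤ) - (j : ℤ)) 1 ((Xq row col 1 b : ℚ) : ℂ) 0)) := by
      apply tendsto_finset_sum
      intro b hb
      have hrb : 1 < row b := (Finset.mem_filter.mp hb).2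
      have hw : Tendsto (fun u : ℝ => Xf 1 b (Yf u⁻¹)) atTop
          (nhds ((Xq row col 1 b : ℚ) : ℂ)) := (hXT 1 b hrb).comp tendsto_inv_atTop_zero
      refine (Q_tendsto hw hginv (Qden_ne_zero (fun _ => one_ne_zero) (fun hd => ?_)
        (fun _ => ?_))).neg
      · have hbj : b = j := Fin.ext (by omega)
        subst hbj
        rw [sub_ne_zero]
        intro hc
        exact absurd (show Xq row col 1 b = 1 from by exact_mod_cast hc)
          (ne_of_lt (Xq_lt_one hA le_rfl hrb))
      · exact_mod_cast (Xq_pos hA hrb).ne'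
    have total := hS1lim.sub hS2lim
    -- identify the limit value
    have hcard : ((Finset.univ.erase j).filter (fun a : Fin N => (a : ℕ) < (j : ℕ))).card
        = (j : ℕ) := by
      rw [show (Finset.univ.erase j).filter (fun a : Fin N => (a : ℕ) < (j : ℕ))
          = Finset.univ.filter (fun a : Fin N => (a : ℕ) < (j : ℕ)) from by
        ext a
        simp only [Finset.mem_filter, Finset.mem_erase, Finset.mem_univ, true_and, and_true]
        constructor
        · rintro ⟨-, h2⟩; exact h2
        · intro h2; exact ⟨Fin.ne_of_val_ne (by omega), h2⟩]
      exact card_filter_val_lt j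
    have hv1 : ∑ l ∈ Finset.univ.erase j, -Q ((l : ℤ) - (j : ℤ)) 1 1 0 = ((j : ℕ) : ℂ) := by
      rw [Finset.sum_neg_distrib, sum_Q_zero j _ one_ne_zero (fun _ => 1), hcard,
        if_neg (Finset.notMem_erase j _)]
      ring
    have hv2 : ∑ b ∈ Finset.univ.filter (fun b : Fin N => 1 < row b),
        -Q ((b : ℤ) - (j : ℤ)) 1 ((Xq row col 1 b : ℚ) : ℂ) 0
        = ((fcnt row 1 j : ℕ) : ℂ)
          - (if 1 < row j then 1 / (((Xq row col 1 j : ℚ) : ℂ) - 1) else 0) := by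
      rw [Finset.sum_neg_distrib,
        sum_Q_zero j _ one_ne_zero (fun b => ((Xq row col 1 b : ℚ) : ℂ)),
        show Finset.univ.filter (fun b : Fin N => 1 < row b) = fltS row 1 from rfl,
        card_fltS_lt 1 j]
      by_cases hrj : 1 < row j
      · rw [if_pos (mem_fltS.mpr hrj), if_pos hrj]
        ring
      · rw [if_neg (fun hc => hrj (mem_fltS.mp hc)), if_neg hrj]
        ring
    rw [hv1, hv2] at total
    have hz := content_eq hsum hbox hinj hstdrow (col := col) j
    have hval : ((j : ℕ) : ℂ) - (((fcnt row 1 j : ℕ) : ℂ)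
        - (if 1 < row j then 1 / (((Xq row col 1 j : ℚ) : ℂ) - 1) else 0))
        = (((col j : ℤ) - (row j : ℤ) : ℤ) : ℂ) := by
      by_cases hrj : 1 < row j
      · rw [if_pos hrj]
        rw [if_pos hrj] at hz
        rw [Xq_one_formula (hA 1 j le_rfl hrj)]
        have := congrArg (fun z : ℤ => (z : ℂ)) hz
        push_cast at this ⊢
        linear_combination this
      · rw [if_neg hrj]
        rw [if_neg hrj] at hz
        have := congrArg (fun z : ℤ => (z : ℂ)) hz
        push_cast at this ⊢
        linear_combination this
    rw [hval] at total
    refine total.congr' ?_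
    filter_upwards [eventually_gt_atTop (0 : ℝ)] with u hu
    have hU : (u : ℂ) ≠ 0 := Complex.ofReal_ne_zero.mpr hu.ne'
    rw [mul_sub, Finset.mul_sum, Finset.mul_sum]
    congr 1
    · refine Finset.sum_congr rfl (fun l _ => ?_)
      rw [mul_comm]
      have hterm := inv_mul_T_neg hU ((j : ℕ) + 1) ((l : ℕ) + 1) 1 1
      simp only [one_mul] at hterm
      rw [hterm, show ((((l : ℕ) + 1 : ℕ)) : ℤ) - (((j : ℕ) + 1 : ℕ) : ℤ)
        = ((l : ℕ) : ℤ) - ((j : ℕ) : ℤ) by push_cast; ring]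
    · refine Finset.sum_congr rfl (fun b _ => ?_)
      rw [mul_comm, htfun]
      have hterm := inv_mul_T_neg hU ((j : ℕ) + 1) ((b : ℕ) + 1) 1 (Xf 1 b (Yf u⁻¹))
      simp only [one_mul] at hterm
      rw [show Xf 1 b (Yf u⁻¹) * ((u : ℂ)) ^ ((b : ℕ) + 1)
        = ((u : ℂ)) ^ ((b : ℕ) + 1) * Xf 1 b (Yf u⁻¹) from mul_comm _ _] at hterm
      rw [hterm, show ((((b : ℕ) + 1 : ℕ)) : ℤ) - (((j : ℕ) + 1 : ℕ) : ℤ)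
        = ((b : ℕ) : ℤ) - ((j : ℕ) : ℤ) by push_cast; ring]
  -- part (a): eventual statements in the variable ε = 1/u
  have hXl : ∀ (m : ℕ) (b : Fin N), m < row b →
      Tendsto (fun ε : ℝ => Xf m b (Yf ε)) (nhdsWithin (0:ℝ) (Set.Ioi 0))
        (nhds ((Xq row col m b : ℚ) : ℂ)) :=
    fun m b h => (hXT m b h).mono_left nhdsWithin_le_nhds
  have hXqne : ∀ (m : ℕ) (b : Fin N), m < row b → ((Xq row col m b : ℚ) : ℂ) ≠ 0 :=
    fun m b h => by exact_mod_cast (Xq_pos hA h).ne'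
  have EV1 : ∀ᶠ ε : ℝ in nhdsWithin (0:ℝ) (Set.Ioi 0), ∀ a : Fin N, ∀ b : Fin N,
      1 < row b → tfun 1 b ε⁻¹ ≠ ((ε⁻¹ : ℝ) : ℂ) ^ ((a : ℕ) + 1) := by
    rw [Filter.eventually_all]
    intro a
    rw [Filter.eventually_all]
    intro b
    by_cases hrb : 1 < row b
    · have hmain := eventually_mono_ne ((b : ℕ) + 1) ((a : ℕ) + 1) (hXl 1 b hrb)
        (tendsto_const_nhds (x := (1 : ℂ))) (hXqne 1 b hrb) one_ne_zero
        (fun _ hc => absurd (show Xq row col 1 b = 1 by exact_mod_cast hc)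
          (ne_of_lt (Xq_lt_one hA le_rfl hrb)))
      filter_upwards [hmain] with ε hne _
      simp only [htfun]
      rw [inv_inv, Complex.ofReal_inv]
      simpa [mul_one] using hne
    · filter_upwards with ε hc
      exact absurd hc hrb
  have EV2 : ∀ᶠ ε : ℝ in nhdsWithin (0:ℝ) (Set.Ioi 0), ∀ i ∈ Finset.Icc 1 (k - 1),
      ∀ b b' : Fin N, i < row b → i < row b' → b ≠ b' →
      tfun i b ε⁻¹ ≠ tfun i b' ε⁻¹ := by
    rw [Filter.eventually_all_finset]
    intro i hi
    rw [Filter.eventually_all]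
    intro b
    rw [Filter.eventually_all]
    intro b'
    by_cases hc : i < row b ∧ i < row b' ∧ b ≠ b'
    · have hmain := eventually_mono_ne ((b : ℕ) + 1) ((b' : ℕ) + 1) (hXl i b hc.1)
        (hXl i b' hc.2.1) (hXqne i b hc.1) (hXqne i b' hc.2.1)
        (fun h => absurd (Fin.ext (by omega) : b = b') hc.2.2)
      filter_upwards [hmain] with ε hne _ _ _
      simp only [htfun]
      rw [inv_inv, Complex.ofReal_inv]
      exact hne
    · filter_upwards with ε h1 h2 h3
      exact absurd ⟨h1, h2, h3⟩ hc
  have EV3 : ∀ᶠ ε : ℝ in nhdsWithin (0:ℝ) (Set.Ioi 0), ∀ i ∈ Finset.Icc 1 (k - 1),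
      ∀ b b' : Fin N, i < row b → i + 1 < row b' →
      tfun i b ε⁻¹ ≠ tfun (i + 1) b' ε⁻¹ := by
    rw [Filter.eventually_all_finset]
    intro i hi
    rw [Filter.eventually_all]
    intro b
    rw [Filter.eventually_all]
    intro b'
    by_cases hc : i < row b ∧ i + 1 < row b'
    · have hmain := eventually_mono_ne ((b : ℕ) + 1) ((b' : ℕ) + 1) (hXl i b hc.1)
        (hXl (i + 1) b' hc.2) (hXqne i b hc.1) (hXqne (i + 1) b' (by omega))
        (fun h => by
          have hbb : b = b' := Fin.ext (by omega)
          subst hbb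
          intro hcc
          exact absurd (show Xq row col i b = Xq row col (i + 1) b by exact_mod_cast hcc)
            (Xq_succ_lt hA hc.2).ne')
      filter_upwards [hmain] with ε hne _ _
      simp only [htfun]
      rw [inv_inv, Complex.ofReal_inv]
      exact hne
    · filter_upwards with ε h1 h2
      exact absurd ⟨h1, h2⟩ hc
  have EV4 : ∀ᶠ ε : ℝ in nhdsWithin (0:ℝ) (Set.Ioi 0), ∀ i ∈ Finset.Icc 1 (k - 1),
      ∀ b : Fin N, i < row b →
      (if i = 1 then ∑ a : Fin N, (((ε⁻¹ : ℝ) : ℂ) ^ ((a : ℕ) + 1) - tfun 1 b ε⁻¹)⁻¹ else 0)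
        + 2 * ∑ b' ∈ Finset.univ.filter
            (fun b' : Fin N => i < row b' ∧ b' ≠ b), (tfun i b ε⁻¹ - tfun i b' ε⁻¹)⁻¹
        - ∑ b' ∈ Finset.univ.filter
            (fun b' : Fin N => i + 1 < row b'), (tfun i b ε⁻¹ - tfun (i + 1) b' ε⁻¹)⁻¹
        - (if 2 ≤ i then ∑ b' ∈ Finset.univ.filter
            (fun b' : Fin N => i - 1 < row b'), (tfun i b ε⁻¹ - tfun (i - 1) b' ε⁻¹)⁻¹
           else 0)
        = 0 := by
    rw [Filter.eventually_all_finset]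
    intro i hi
    rcases Finset.mem_Icc.mp hi with ⟨hi1, -⟩
    rw [Filter.eventually_all]
    intro b
    by_cases hib : i < row b
    · filter_upwards [hGcEv.filter_mono nhdsWithin_le_nhds, self_mem_nhdsWithin,
        (hXl i b hib).eventually_ne (hXqne i b hib)] with ε hg hε hx
      intro _
      have hε0 : (0:ℝ) < ε := hε
      have hu : ((ε⁻¹ : ℝ) : ℂ) ≠ 0 :=
        Complex.ofReal_ne_zero.mpr (inv_ne_zero hε0.ne')
      have hG : Gc row i b (((ε⁻¹ : ℝ) : ℂ))⁻¹ (Yf ε) = 0 := by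
        rw [Complex.ofReal_inv, inv_inv]
        exact hg i b hi1 hib
      have hmain := Bethe_eq (row := row) hu hi1 hx hG
      simp only [htfun, inv_inv]
      exact hmain
    · filter_upwards with ε h1
      exact absurd h1 hib
  have EVall := EV1.and (EV2.and (EV3.and EV4))
  obtain ⟨δ, hδpos, hδ⟩ : ∃ δ > 0, ∀ ε : ℝ, 0 < ε → ε < δ →
      ((∀ a : Fin N, ∀ b : Fin N, 1 < row b →
        tfun 1 b ε⁻¹ ≠ ((ε⁻¹ : ℝ) : ℂ) ^ ((a : ℕ) + 1)) ∧
       ((∀ i ∈ Finset.Icc 1 (k - 1), ∀ b b' : Fin N, i < row b → i < row b' → b ≠ b' →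
        tfun i b ε⁻¹ ≠ tfun i b' ε⁻¹) ∧
       ((∀ i ∈ Finset.Icc 1 (k - 1), ∀ b b' : Fin N, i < row b → i + 1 < row b' →
        tfun i b ε⁻¹ ≠ tfun (i + 1) b' ε⁻¹) ∧
       (∀ i ∈ Finset.Icc 1 (k - 1), ∀ b : Fin N, i < row b →
      (if i = 1 then ∑ a : Fin N, (((ε⁻¹ : ℝ) : ℂ) ^ ((a : ℕ) + 1) - tfun 1 b ε⁻¹)⁻¹ else 0)
        + 2 * ∑ b' ∈ Finset.univ.filter
            (fun b' : Fin N => i < row b' ∧ b' ≠ b), (tfun i b ε⁻¹ - tfun i b' ε⁻¹)⁻¹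
        - ∑ b' ∈ Finset.univ.filter
            (fun b' : Fin N => i + 1 < row b'), (tfun i b ε⁻¹ - tfun (i + 1) b' ε⁻¹)⁻¹
        - (if 2 ≤ i then ∑ b' ∈ Finset.univ.filter
            (fun b' : Fin N => i - 1 < row b'), (tfun i b ε⁻¹ - tfun (i - 1) b' ε⁻¹)⁻¹
           else 0)
        = 0)))) := by
    have h' := eventually_nhdsWithin_iff.mp EVall
    rw [Metric.eventually_nhds_iff] at h'
    obtain ⟨δ, hδpos, hδ2⟩ := h'
    refine ⟨δ, hδpos, fun ε hε1 hε2 => hδ2 ?_ (Set.mem_Ioi.mpr hε1)⟩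
    rw [Real.dist_eq, sub_zero, abs_of_pos hε1]
    exact hε2
  refine ⟨max δ⁻¹ 1, tfun, lt_of_lt_of_le one_pos (le_max_right _ _), ?_, partB, partC⟩
  intro u hu
  have hu1 : (1 : ℝ) < u := lt_of_le_of_lt (le_max_right _ _) hu
  have hu0 : (0 : ℝ) < u := by linarith
  have hεpos : (0 : ℝ) < u⁻¹ := inv_pos.mpr hu0
  have hεδ : u⁻¹ < δ := by
    have h1 : δ⁻¹ < u := lt_of_le_of_lt (le_max_left _ _) hu
    rw [← inv_inv δ]
    exact inv_strictAnti₀ (inv_pos.mpr hδpos) h1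
  have hbig := hδ u⁻¹ hεpos hεδ
  simp only [inv_inv] at hbig
  exact ⟨hbig.1, hbig.2.1, hbig.2.2.1, hbig.2.2.2⟩

end
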